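/- (Non-decomposition.) There is no *-term P such that se(P) can be decomposed as X[△↦Y] with X ∈ T_{A,△} and Y ∈ T_A, where X ≠ △, X contains the leaf △, and X contains neither the leaf T nor the leaf F. -/
import Mathlib


/-- Evaluation trees over a set `A` of atoms, with leaves `T` and `F`. -/
inductive ETree (A : Type) : Type
  | leafT : ETree A
  | leafF : ETree A
  | node : ETree A → A → ETree A → ETree A

namespace ETree

/-- Leaf replacement `X[T↦Y, F↦Z]`. -/
def repl {A : Type} : ETree A → ETree A → ETree A → ETree A
  | leafT, y, _ => y
  | leafF, _, z => z
  | node l a r, y, z => node (repl l y z) a (repl r y z)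

end ETree

namespace ETree

/-- The tree contains the leaf `T`. -/
def hasT {A : Type} : ETree A → Prop
  | leafT => True
  | leafF => False
  | node l _ r => hasT l ∨ hasT r

/-- The tree contains the leaf `F`. -/
def hasF {A : Type} : ETree A → Prop
  | leafT => False
  | leafF => True
  | node l _ r => hasF l ∨ hasF r

end ETree

/-- Closed sequential propositional statements over `A`:
`P ::= a | T | F | ¬P | P ∧❛ P | P ∨❛ P`. -/
inductive STerm (A : Type) : Type
  | atom : A → STerm A
  | tt : STerm A
  | ff : STerm A
  | neg : STerm A → STerm A
  | and : STerm A → STerm A → STerm A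
  | or : STerm A → STerm A → STerm A

/-- The short-circuit evaluation function `se : S_A → T_A`. -/
def se {A : Type} : STerm A → ETree A
  | .tt => .leafT
  | .ff => .leafF
  | .atom a => .node .leafT a .leafF
  | .neg P => (se P).repl .leafF .leafT
  | .and P Q => (se P).repl (se Q) .leafF
  | .or P Q => (se P).repl .leafT (se Q)

/-- T-terms: `P^T ::= T | (a ∧❛ P^T) ∨❛ P^T`. -/
inductive IsTTerm {A : Type} : STerm A → Prop
  | tt : IsTTerm .tt
  | node (a : A) {P Q} : IsTTerm P → IsTTerm Q → IsTTerm (.or (.and (.atom a) P) Q)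

/-- F-terms: `P^F ::= F | (a ∨❛ P^F) ∧❛ P^F`. -/
inductive IsFTerm {A : Type} : STerm A → Prop
  | ff : IsFTerm .ff
  | node (a : A) {P Q} : IsFTerm P → IsFTerm Q → IsFTerm (.and (.or (.atom a) P) Q)

/-- ℓ-terms: `P^ℓ ::= (a ∧❛ P^T) ∨❛ P^F | (¬a ∧❛ P^T) ∨❛ P^F`. -/
inductive IsLTerm {A : Type} : STerm A → Prop
  | pos (a : A) {P Q} : IsTTerm P → IsFTerm Q → IsLTerm (.or (.and (.atom a) P) Q)
  | neg (a : A) {P Q} : IsTTerm P → IsFTerm Q → IsLTerm (.or (.and (.neg (.atom a)) P) Q)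

mutual
/-- The category `P^c ::= P^ℓ | P^* ∧❛ P^d`. -/
inductive IsCTerm {A : Type} : STerm A → Prop
  | ell {P} : IsLTerm P → IsCTerm P
  | and {P Q} : IsStarTerm P → IsDTerm Q → IsCTerm (.and P Q)

/-- The category `P^d ::= P^ℓ | P^* ∨❛ P^c`. -/
inductive IsDTerm {A : Type} : STerm A → Prop
  | ell {P} : IsLTerm P → IsDTerm P
  | or {P Q} : IsStarTerm P → IsCTerm Q → IsDTerm (.or P Q)

/-- *-terms: `P^* ::= P^c | P^d`. -/
inductive IsStarTerm {A : Type} : STerm A → Prop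
  | c {P} : IsCTerm P → IsStarTerm P
  | d {P} : IsDTerm P → IsStarTerm P
end

/-- Binary trees over `A` with leaves in `{T, F, △}`. -/
inductive DTree (A : Type) : Type
  | leafT : DTree A
  | leafF : DTree A
  | leafD : DTree A
  | node : DTree A → A → DTree A → DTree A

namespace DTree

/-- `X[△↦Z]`: replace every `△`-leaf of `X` by the evaluation tree `Z`. -/
def substD {A : Type} : DTree A → ETree A → ETree A
  | leafT, _ => .leafT
  | leafF, _ => .leafF
  | leafD, z => z
  | node l a r, z => .node (substD l z) a (substD r z)

/-- The tree contains the leaf `T`. -/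
def hasT {A : Type} : DTree A → Prop
  | leafT => True
  | leafF => False
  | leafD => False
  | node l _ r => hasT l ∨ hasT r

/-- The tree contains the leaf `F`. -/
def hasF {A : Type} : DTree A → Prop
  | leafT => False
  | leafF => True
  | leafD => False
  | node l _ r => hasF l ∨ hasF r

/-- The tree contains the leaf `△`. -/
def hasD {A : Type} : DTree A → Prop
  | leafT => False
  | leafF => False
  | leafD => True
  | node l _ r => hasD l ∨ hasD r

end DTree

section Aux

variable {A : Type}

lemma etree_sizeOf_pos (U : ETree A) : 0 < sizeOf U := by
  cases U <;> simp

lemma repl_id_T (U : ETree A) (Z : ETree A) (h : ¬ U.hasF) : U.repl .leafT Z = U := by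
  induction U with
  | leafT => rfl
  | leafF => simp [ETree.hasF] at h
  | node l a r ihl ihr =>
    simp [ETree.hasF] at h
    simp [ETree.repl, ihl h.1, ihr h.2]

lemma repl_id_F (U : ETree A) (Z : ETree A) (h : ¬ U.hasT) : U.repl Z .leafF = U := by
  induction U with
  | leafT => simp [ETree.hasT] at h
  | leafF => rfl
  | node l a r ihl ihr =>
    simp [ETree.hasT] at h
    simp [ETree.repl, ihl h.1, ihr h.2]

lemma hasT_repl (U Y Z : ETree A) :
    (U.repl Y Z).hasT ↔ (U.hasT ∧ Y.hasT) ∨ (U.hasF ∧ Z.hasT) := by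
  induction U with
  | leafT => simp [ETree.repl, ETree.hasT, ETree.hasF]
  | leafF => simp [ETree.repl, ETree.hasT, ETree.hasF]
  | node l a r ihl ihr =>
    simp [ETree.repl, ETree.hasT, ETree.hasF, ihl, ihr]
    tauto

lemma hasF_repl (U Y Z : ETree A) :
    (U.repl Y Z).hasF ↔ (U.hasT ∧ Y.hasF) ∨ (U.hasF ∧ Z.hasF) := by
  induction U with
  | leafT => simp [ETree.repl, ETree.hasT, ETree.hasF]
  | leafF => simp [ETree.repl, ETree.hasT, ETree.hasF]
  | node l a r ihl ihr =>
    simp [ETree.repl, ETree.hasT, ETree.hasF, ihl, ihr]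
    tauto

lemma hasT_or_hasF (U : ETree A) : U.hasT ∨ U.hasF := by
  induction U with
  | leafT => simp [ETree.hasT]
  | leafF => simp [ETree.hasF]
  | node l a r ihl ihr =>
    simp [ETree.hasT, ETree.hasF]
    tauto

lemma dtree_hasD (X : DTree A) (h1 : ¬ X.hasT) (h2 : ¬ X.hasF) : X.hasD := by
  induction X with
  | leafT => simp [DTree.hasT] at h1
  | leafF => simp [DTree.hasF] at h2
  | leafD => simp [DTree.hasD]
  | node l a r ihl ihr =>
    simp [DTree.hasT] at h1
    simp [DTree.hasF] at h2
    simp [DTree.hasD]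
    exact Or.inl (ihl h1.1 h2.1)

lemma hasT_substD (X : DTree A) (Y : ETree A) :
    (X.substD Y).hasT ↔ X.hasT ∨ (X.hasD ∧ Y.hasT) := by
  induction X with
  | leafT => simp [DTree.substD, DTree.hasT, DTree.hasD, ETree.hasT]
  | leafF => simp [DTree.substD, DTree.hasT, DTree.hasD, ETree.hasT]
  | leafD => simp [DTree.substD, DTree.hasT, DTree.hasD]
  | node l a r ihl ihr =>
    simp [DTree.substD, DTree.hasT, DTree.hasD, ETree.hasT, ihl, ihr]
    tauto

lemma hasF_substD (X : DTree A) (Y : ETree A) :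
    (X.substD Y).hasF ↔ X.hasF ∨ (X.hasD ∧ Y.hasF) := by
  induction X with
  | leafT => simp [DTree.substD, DTree.hasF, DTree.hasD, ETree.hasF]
  | leafF => simp [DTree.substD, DTree.hasF, DTree.hasD, ETree.hasF]
  | leafD => simp [DTree.substD, DTree.hasF, DTree.hasD]
  | node l a r ihl ihr =>
    simp [DTree.substD, DTree.hasF, DTree.hasD, ETree.hasF, ihl, ihr]
    tauto

lemma tterm_facts {P : STerm A} (h : IsTTerm P) : (se P).hasT ∧ ¬ (se P).hasF := by
  induction h with
  | tt => simp [se, ETree.hasT, ETree.hasF]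
  | @node a P Q hP hQ ihP ihQ =>
    have hse : se (.or (.and (.atom a) P) Q) =
        ETree.node ((se P).repl .leafT (se Q)) a (se Q) := by
      simp [se, ETree.repl]
    rw [hse, repl_id_T _ _ ihP.2]
    simp [ETree.hasT, ETree.hasF]
    tauto

lemma fterm_facts {P : STerm A} (h : IsFTerm P) : (se P).hasF ∧ ¬ (se P).hasT := by
  induction h with
  | ff => simp [se, ETree.hasT, ETree.hasF]
  | @node a P Q hP hQ ihP ihQ =>
    have hse : se (.and (.or (.atom a) P) Q) =
        ETree.node (se Q) a ((se P).repl (se Q) .leafF) := by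
      simp [se, ETree.repl]
    rw [hse, repl_id_F _ _ ihP.2]
    simp [ETree.hasT, ETree.hasF]
    tauto

lemma lterm_shape {P : STerm A} (h : IsLTerm P) :
    ∃ (L R : ETree A) (a : A), se P = .node L a R ∧
      ((L.hasT ∧ ¬ L.hasF ∧ R.hasF ∧ ¬ R.hasT) ∨
       (L.hasF ∧ ¬ L.hasT ∧ R.hasT ∧ ¬ R.hasF)) := by
  cases h with
  | pos a hP hQ =>
    have hP' := tterm_facts hP
    have hQ' := fterm_facts hQ
    refine ⟨se _, se _, a, ?_, Or.inl ⟨hP'.1, hP'.2, hQ'.1, hQ'.2⟩⟩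
    simp [se, ETree.repl, repl_id_T _ _ hP'.2]
  | neg a hP hQ =>
    have hP' := tterm_facts hP
    have hQ' := fterm_facts hQ
    refine ⟨se _, se _, a, ?_, Or.inr ⟨hQ'.1, hQ'.2, hP'.1, hP'.2⟩⟩
    simp [se, ETree.repl, repl_id_T _ _ hP'.2]

lemma star_facts : ∀ (n : ℕ) (P : STerm A), sizeOf P ≤ n → IsStarTerm P →
    (se P).hasT ∧ (se P).hasF ∧ ∃ (l : ETree A) (a : A) (r : ETree A), se P = .node l a r := by
  intro n
  induction n with
  | zero =>
    intro P hsz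
    cases P <;> simp at hsz
  | succ n ih =>
    intro P hsz hstar
    have hL : ∀ Q : STerm A, IsLTerm Q →
        (se Q).hasT ∧ (se Q).hasF ∧ ∃ (l : ETree A) (a : A) (r : ETree A), se Q = .node l a r := by
      intro Q hQ
      obtain ⟨L, R, a, hse, hcase⟩ := lterm_shape hQ
      rw [hse]
      simp [ETree.hasT, ETree.hasF]
      tauto
    rcases hstar with hc | hd
    · cases hc with
      | ell hl => exact hL _ hl
      | @and P1 P2 h1 h2 =>
        have hs1 : sizeOf P1 ≤ n := by
          have : sizeOf (STerm.and P1 P2) = 1 + sizeOf P1 + sizeOf P2 := by simp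
          have h2p : 0 < sizeOf P2 := by cases P2 <;> simp
          omega
        have hs2 : sizeOf P2 ≤ n := by
          have : sizeOf (STerm.and P1 P2) = 1 + sizeOf P1 + sizeOf P2 := by simp
          have h1p : 0 < sizeOf P1 := by cases P1 <;> simp
          omega
        obtain ⟨hT1, hF1, l1, a1, r1, hn1⟩ := ih P1 hs1 h1
        obtain ⟨hT2, hF2, -⟩ := ih P2 hs2 (IsStarTerm.d h2)
        have hse : se (STerm.and P1 P2) = (se P1).repl (se P2) .leafF := by simp [se]
        refine ⟨?_, ?_, ?_⟩
        · rw [hse, hasT_repl]; tauto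
        · rw [hse, hasF_repl]; simp [ETree.hasF]; tauto
        · rw [hse, hn1]
          exact ⟨_, _, _, rfl⟩
    · cases hd with
      | ell hl => exact hL _ hl
      | @or P1 P2 h1 h2 =>
        have hs1 : sizeOf P1 ≤ n := by
          have : sizeOf (STerm.or P1 P2) = 1 + sizeOf P1 + sizeOf P2 := by simp
          have h2p : 0 < sizeOf P2 := by cases P2 <;> simp
          omega
        have hs2 : sizeOf P2 ≤ n := by
          have : sizeOf (STerm.or P1 P2) = 1 + sizeOf P1 + sizeOf P2 := by simp
          have h1p : 0 < sizeOf P1 := by cases P1 <;> simp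
          omega
        obtain ⟨hT1, hF1, l1, a1, r1, hn1⟩ := ih P1 hs1 h1
        obtain ⟨hT2, hF2, -⟩ := ih P2 hs2 (IsStarTerm.c h2)
        have hse : se (STerm.or P1 P2) = (se P1).repl .leafT (se P2) := by simp [se]
        refine ⟨?_, ?_, ?_⟩
        · rw [hse, hasT_repl]; simp [ETree.hasT]; tauto
        · rw [hse, hasF_repl]; tauto
        · rw [hse, hn1]
          exact ⟨_, _, _, rfl⟩

lemma size_le_replT (C : ETree A) : ∀ B : ETree A, B.hasT → sizeOf C ≤ sizeOf (B.repl C .leafF) := by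
  intro B
  induction B with
  | leafT => intro _; simp [ETree.repl]
  | leafF => intro h; simp [ETree.hasT] at h
  | node l a r ihl ihr =>
    intro h
    simp only [ETree.hasT] at h
    have hl := etree_sizeOf_pos (l.repl C .leafF)
    have hr := etree_sizeOf_pos (r.repl C .leafF)
    rcases h with h | h
    · have := ihl h
      simp [ETree.repl]; omega
    · have := ihr h
      simp [ETree.repl]; omega

lemma size_le_replF (C : ETree A) : ∀ B : ETree A, B.hasF → sizeOf C ≤ sizeOf (B.repl .leafT C) := by
  intro B
  induction B with
  | leafT => intro h; simp [ETree.hasF] at h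
  | leafF => intro _; simp [ETree.repl]
  | node l a r ihl ihr =>
    intro h
    simp only [ETree.hasF] at h
    have hl := etree_sizeOf_pos (l.repl .leafT C)
    have hr := etree_sizeOf_pos (r.repl .leafT C)
    rcases h with h | h
    · have := ihl h
      simp [ETree.repl]; omega
    · have := ihr h
      simp [ETree.repl]; omega

lemma ne_replT_node (C : ETree A) (hC : C.hasT)
    {bl : ETree A} {b : A} {br : ETree A} :
    C ≠ (ETree.node bl b br).repl C .leafF := by
  intro hEq
  by_cases hT : (ETree.node bl b br).hasT
  · have hle := size_le_replT C _ hT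
    simp only [ETree.hasT] at hT
    have h1 := etree_sizeOf_pos (bl.repl C .leafF)
    have h2 := etree_sizeOf_pos (br.repl C .leafF)
    rcases hT with h | h
    · have := size_le_replT C bl h
      have hsz : sizeOf ((ETree.node bl b br).repl C .leafF) =
          1 + sizeOf b + sizeOf (bl.repl C .leafF) + sizeOf (br.repl C .leafF) := by
        simp [ETree.repl]
      have : sizeOf C = sizeOf ((ETree.node bl b br).repl C .leafF) := by rw [← hEq]
      omega
    · have := size_le_replT C br h
      have hsz : sizeOf ((ETree.node bl b br).repl C .leafF) =
          1 + sizeOf b + sizeOf (bl.repl C .leafF) + sizeOf (br.repl C .leafF) := by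
        simp [ETree.repl]
      have : sizeOf C = sizeOf ((ETree.node bl b br).repl C .leafF) := by rw [← hEq]
      omega
  · rw [repl_id_F _ _ hT] at hEq
    rw [hEq] at hC
    simp only [ETree.hasT] at hC hT
    tauto

lemma ne_replF_node (C : ETree A) (hC : C.hasF)
    {bl : ETree A} {b : A} {br : ETree A} :
    C ≠ (ETree.node bl b br).repl .leafT C := by
  intro hEq
  by_cases hF : (ETree.node bl b br).hasF
  · have hle := size_le_replF C _ hF
    simp only [ETree.hasF] at hF
    have h1 := etree_sizeOf_pos (bl.repl .leafT C)
    have h2 := etree_sizeOf_pos (br.repl .leafT C)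
    rcases hF with h | h
    · have := size_le_replF C bl h
      have hsz : sizeOf ((ETree.node bl b br).repl .leafT C) =
          1 + sizeOf b + sizeOf (bl.repl .leafT C) + sizeOf (br.repl .leafT C) := by
        simp [ETree.repl]
      have : sizeOf C = sizeOf ((ETree.node bl b br).repl .leafT C) := by rw [← hEq]
      omega
    · have := size_le_replF C br h
      have hsz : sizeOf ((ETree.node bl b br).repl .leafT C) =
          1 + sizeOf b + sizeOf (bl.repl .leafT C) + sizeOf (br.repl .leafT C) := by
        simp [ETree.repl]
      have : sizeOf C = sizeOf ((ETree.node bl b br).repl .leafT C) := by rw [← hEq]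
      omega
  · rw [repl_id_T _ _ hF] at hEq
    rw [hEq] at hC
    simp only [ETree.hasF] at hC hF
    tauto

lemma inj_replT (C : ETree A) (hC : C.hasT)
    (hCnode : ∃ (l : ETree A) (a : A) (r : ETree A), C = .node l a r) :
    ∀ U V : ETree A, U.repl C .leafF = V.repl C .leafF → U = V := by
  obtain ⟨cl, c, cr, hCn⟩ := hCnode
  intro U
  induction U with
  | leafT =>
    intro V h
    cases V with
    | leafT => rfl
    | leafF =>
      exfalso
      simp [ETree.repl] at h
      rw [h] at hCn
      cases hCn
    | node vl v vr =>
      exfalso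
      simp only [ETree.repl] at h
      exact ne_replT_node C hC h
  | leafF =>
    intro V h
    cases V with
    | leafT =>
      exfalso
      simp [ETree.repl] at h
      rw [← h] at hCn
      cases hCn
    | leafF => rfl
    | node vl v vr =>
      exfalso
      simp [ETree.repl] at h
  | node ul u ur ihl ihr =>
    intro V h
    cases V with
    | leafT =>
      exfalso
      simp only [ETree.repl] at h
      exact ne_replT_node C hC h.symm
    | leafF =>
      exfalso
      simp [ETree.repl] at h
    | node vl v vr =>
      simp only [ETree.repl, ETree.node.injEq] at h
      obtain ⟨h1, h2, h3⟩ := h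
      rw [ihl _ h1, h2, ihr _ h3]

lemma inj_replF (C : ETree A) (hC : C.hasF)
    (hCnode : ∃ (l : ETree A) (a : A) (r : ETree A), C = .node l a r) :
    ∀ U V : ETree A, U.repl .leafT C = V.repl .leafT C → U = V := by
  obtain ⟨cl, c, cr, hCn⟩ := hCnode
  intro U
  induction U with
  | leafF =>
    intro V h
    cases V with
    | leafF => rfl
    | leafT =>
      exfalso
      simp [ETree.repl] at h
      rw [h] at hCn
      cases hCn
    | node vl v vr =>
      exfalso
      simp only [ETree.repl] at h
      exact ne_replF_node C hC h
  | leafT =>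
    intro V h
    cases V with
    | leafF =>
      exfalso
      simp [ETree.repl] at h
      rw [← h] at hCn
      cases hCn
    | leafT => rfl
    | node vl v vr =>
      exfalso
      simp [ETree.repl] at h
  | node ul u ur ihl ihr =>
    intro V h
    cases V with
    | leafF =>
      exfalso
      simp only [ETree.repl] at h
      exact ne_replF_node C hC h.symm
    | leafT =>
      exfalso
      simp [ETree.repl] at h
    | node vl v vr =>
      simp only [ETree.repl, ETree.node.injEq] at h
      obtain ⟨h1, h2, h3⟩ := h
      rw [ihl _ h1, h2, ihr _ h3]

lemma helper_and (C : ETree A) (hC : C.hasT)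
    (hCnode : ∃ (l : ETree A) (a : A) (r : ETree A), C = .node l a r)
    (H2 : ∀ (X : DTree A) (Y : ETree A), C = X.substD Y → ¬ X.hasT → ¬ X.hasF → X = .leafD) :
    ∀ (X : DTree A) (U : ETree A) (Y : ETree A),
      U.repl C .leafF = X.substD Y → ¬ X.hasT → ¬ X.hasF →
      ∃ V, U = X.substD V ∧ Y = V.repl C .leafF := by
  intro X
  induction X with
  | leafT => intro U Y _ h1 _; simp [DTree.hasT] at h1
  | leafF => intro U Y _ _ h2; simp [DTree.hasF] at h2
  | leafD =>
    intro U Y heq _ _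
    exact ⟨U, by simp [DTree.substD], by simp [DTree.substD] at heq; exact heq.symm⟩
  | node Xl a Xr ihl ihr =>
    intro U Y heq h1 h2
    simp only [DTree.hasT] at h1
    simp only [DTree.hasF] at h2
    push_neg at h1 h2
    cases U with
    | leafT =>
      exfalso
      simp only [ETree.repl] at heq
      have := H2 (.node Xl a Xr) Y heq (by simp [DTree.hasT]; tauto) (by simp [DTree.hasF]; tauto)
      cases this
    | leafF =>
      exfalso
      simp [ETree.repl, DTree.substD] at heq
    | node Ul b Ur =>
      simp only [ETree.repl, DTree.substD, ETree.node.injEq] at heq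
      obtain ⟨e1, e2, e3⟩ := heq
      obtain ⟨Vl, hVl1, hVl2⟩ := ihl Ul Y e1 h1.1 h2.1
      obtain ⟨Vr, hVr1, hVr2⟩ := ihr Ur Y e3 h1.2 h2.2
      have hVV : Vl = Vr := inj_replT C hC hCnode Vl Vr (hVl2 ▸ hVr2 ▸ rfl)
      refine ⟨Vl, ?_, hVl2⟩
      simp [DTree.substD, ← hVl1, e2, hVV ▸ hVr1]

lemma helper_or (C : ETree A) (hC : C.hasF)
    (hCnode : ∃ (l : ETree A) (a : A) (r : ETree A), C = .node l a r)
    (H2 : ∀ (X : DTree A) (Y : ETree A), C = X.substD Y → ¬ X.hasT → ¬ X.hasF → X = .leafD) :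
    ∀ (X : DTree A) (U : ETree A) (Y : ETree A),
      U.repl .leafT C = X.substD Y → ¬ X.hasT → ¬ X.hasF →
      ∃ V, U = X.substD V ∧ Y = V.repl .leafT C := by
  intro X
  induction X with
  | leafT => intro U Y _ h1 _; simp [DTree.hasT] at h1
  | leafF => intro U Y _ _ h2; simp [DTree.hasF] at h2
  | leafD =>
    intro U Y heq _ _
    exact ⟨U, by simp [DTree.substD], by simp [DTree.substD] at heq; exact heq.symm⟩
  | node Xl a Xr ihl ihr =>
    intro U Y heq h1 h2
    simp only [DTree.hasT] at h1
    simp only [DTree.hasF] at h2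
    push_neg at h1 h2
    cases U with
    | leafF =>
      exfalso
      simp only [ETree.repl] at heq
      have := H2 (.node Xl a Xr) Y heq (by simp [DTree.hasT]; tauto) (by simp [DTree.hasF]; tauto)
      cases this
    | leafT =>
      exfalso
      simp [ETree.repl, DTree.substD] at heq
    | node Ul b Ur =>
      simp only [ETree.repl, DTree.substD, ETree.node.injEq] at heq
      obtain ⟨e1, e2, e3⟩ := heq
      obtain ⟨Vl, hVl1, hVl2⟩ := ihl Ul Y e1 h1.1 h2.1
      obtain ⟨Vr, hVr1, hVr2⟩ := ihr Ur Y e3 h1.2 h2.2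
      have hVV : Vl = Vr := inj_replF C hC hCnode Vl Vr (hVl2 ▸ hVr2 ▸ rfl)
      refine ⟨Vl, ?_, hVl2⟩
      simp [DTree.substD, ← hVl1, e2, hVV ▸ hVr1]

lemma lterm_main {P : STerm A} (h : IsLTerm P) :
    ∀ (X : DTree A) (Y : ETree A), se P = X.substD Y → ¬ X.hasT → ¬ X.hasF → X = .leafD := by
  intro X Y heq h1 h2
  obtain ⟨L, R, a, hse, hcase⟩ := lterm_shape h
  rw [hse] at heq
  cases X with
  | leafT => simp [DTree.hasT] at h1
  | leafF => simp [DTree.hasF] at h2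
  | leafD => rfl
  | node Xl b Xr =>
    exfalso
    simp only [DTree.hasT] at h1
    simp only [DTree.hasF] at h2
    push_neg at h1 h2
    simp only [DTree.substD, ETree.node.injEq] at heq
    obtain ⟨eL, -, eR⟩ := heq
    have hDl : Xl.hasD := dtree_hasD Xl h1.1 h2.1
    have hDr : Xr.hasD := dtree_hasD Xr h1.2 h2.2
    rcases hcase with ⟨hLT, hLF, hRF, hRT⟩ | ⟨hLF, hLT, hRT, hRF⟩
    · -- L all-T, R all-F
      have hYF : Y.hasF := by
        have : R.hasF := hRF
        rw [eR, hasF_substD] at this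
        rcases this with h' | h'
        · exact absurd h' h2.2
        · exact h'.2
      have : L.hasF := by
        rw [eL, hasF_substD]
        exact Or.inr ⟨hDl, hYF⟩
      exact hLF this
    · -- L all-F, R all-T
      have hYT : Y.hasT := by
        have : R.hasT := hRT
        rw [eR, hasT_substD] at this
        rcases this with h' | h'
        · exact absurd h' h1.2
        · exact h'.2
      have : L.hasT := by
        rw [eL, hasT_substD]
        exact Or.inr ⟨hDl, hYT⟩
      exact hLT this

lemma star_main : ∀ (n : ℕ) (P : STerm A), sizeOf P ≤ n → IsStarTerm P →
    ∀ (X : DTree A) (Y : ETree A), se P = X.substD Y → ¬ X.hasT → ¬ X.hasF → X = .leafD := by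
  intro n
  induction n with
  | zero =>
    intro P hsz
    cases P <;> simp at hsz
  | succ n ih =>
    intro P hsz hstar X Y heq h1 h2
    rcases hstar with hc | hd
    · cases hc with
      | ell hl => exact lterm_main hl X Y heq h1 h2
      | @and P1 P2 hP1 hP2 =>
        have hs1 : sizeOf P1 ≤ n := by
          have : sizeOf (STerm.and P1 P2) = 1 + sizeOf P1 + sizeOf P2 := by simp
          have h2p : 0 < sizeOf P2 := by cases P2 <;> simp
          omega
        have hs2 : sizeOf P2 ≤ n := by
          have : sizeOf (STerm.and P1 P2) = 1 + sizeOf P1 + sizeOf P2 := by simp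
          have h1p : 0 < sizeOf P1 := by cases P1 <;> simp
          omega
        have hstar2 : IsStarTerm P2 := IsStarTerm.d hP2
        obtain ⟨hT2, hF2, hnode2⟩ := star_facts (sizeOf P2) P2 le_rfl hstar2
        have hse : se (STerm.and P1 P2) = (se P1).repl (se P2) .leafF := by simp [se]
        rw [hse] at heq
        obtain ⟨V, hV1, -⟩ := helper_and (se P2) hT2 hnode2
          (fun X' Y' e a b => ih P2 hs2 hstar2 X' Y' e a b) X (se P1) Y heq h1 h2
        exact ih P1 hs1 hP1 X V hV1 h1 h2
    · cases hd with
      | ell hl => exact lterm_main hl X Y heq h1 h2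
      | @or P1 P2 hP1 hP2 =>
        have hs1 : sizeOf P1 ≤ n := by
          have : sizeOf (STerm.or P1 P2) = 1 + sizeOf P1 + sizeOf P2 := by simp
          have h2p : 0 < sizeOf P2 := by cases P2 <;> simp
          omega
        have hs2 : sizeOf P2 ≤ n := by
          have : sizeOf (STerm.or P1 P2) = 1 + sizeOf P1 + sizeOf P2 := by simp
          have h1p : 0 < sizeOf P1 := by cases P1 <;> simp
          omega
        have hstar2 : IsStarTerm P2 := IsStarTerm.c hP2
        obtain ⟨hT2, hF2, hnode2⟩ := star_facts (sizeOf P2) P2 le_rfl hstar2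
        have hse : se (STerm.or P1 P2) = (se P1).repl .leafT (se P2) := by simp [se]
        rw [hse] at heq
        obtain ⟨V, hV1, -⟩ := helper_or (se P2) hF2 hnode2
          (fun X' Y' e a b => ih P2 hs2 hstar2 X' Y' e a b) X (se P1) Y heq h1 h2
        exact ih P1 hs1 hP1 X V hV1 h1 h2

end Aux

/-- Non-decomposition: no *-term `P` admits a decomposition `se(P) = X[△↦Y]` with
`X ≠ △`, `X` containing `△` but containing neither `T` nor `F`. -/
theorem non_decomposition {A : Type} [Nonempty A] :
    ¬ ∃ (P : STerm A) (X : DTree A) (Y : ETree A),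
        IsStarTerm P ∧ se P = X.substD Y ∧ X ≠ DTree.leafD ∧
        X.hasD ∧ ¬ X.hasT ∧ ¬ X.hasF := by
  rintro ⟨P, X, Y, hstar, heq, hne, -, h1, h2⟩
  exact hne (star_main (sizeOf P) P le_rfl hstar X Y heq h1 h2)
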